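/- Let W be a 4-dimensional linear subspace of ℝ⁷. Then φ₀(w₁, w₂, w₃) = 0 for all w₁, w₂, w₃ ∈ W (i.e. W is a coassociative subspace) if and only if W = W_I^{⊥,2} (i.e. W is Type-I 2-Lagrangian with respect to φ₀). -/

import Mathlib

open Module

/-- The exterior 3-form `dxᵃ ∧ dxᵇ ∧ dxᶜ` on `ℝ⁷`. -/
noncomputable def dx3 (a b c : Fin 7) : (Fin 7 → ℝ) [⋀^Fin 3]→ₗ[ℝ] ℝ :=
  (Matrix.detRowAlternating : (Fin 3 → ℝ) [⋀^Fin 3]→ₗ[ℝ] ℝ).compLinearMap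
    (LinearMap.funLeft ℝ ℝ ![a, b, c])

/-- The standard `G₂` 3-form
`φ₀ = dx¹²³ + dx¹⁴⁵ + dx¹⁶⁷ + dx²⁴⁶ − dx²⁵⁷ − dx³⁴⁷ − dx³⁵⁶` on `ℝ⁷`
(with indices shifted to `0, …, 6`). -/
noncomputable def phi0 : (Fin 7 → ℝ) [⋀^Fin 3]→ₗ[ℝ] ℝ :=
  dx3 0 1 2 + dx3 0 3 4 + dx3 0 5 6 + dx3 1 3 5 - dx3 1 4 6 - dx3 2 3 6 - dx3 2 4 5

/-- The Type-I 1st orthogonal complement of `W ⊆ ℝ⁷` with respect to `φ₀`. -/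
def WIperp1 (W : Submodule ℝ (Fin 7 → ℝ)) : Set (Fin 7 → ℝ) :=
  {v | ∀ w ∈ W, ∀ u : Fin 7 → ℝ, phi0 ![v, w, u] = 0}

/-- The Type-I 2nd orthogonal complement of `W ⊆ ℝ⁷` with respect to `φ₀`. -/
def WIperp2 (W : Submodule ℝ (Fin 7 → ℝ)) : Set (Fin 7 → ℝ) :=
  {v | ∀ w₁ ∈ W, ∀ w₂ ∈ W, phi0 ![v, w₁, w₂] = 0}

open Matrix

/-- Auxiliary: the `(a,b,c)` 3×3 minor-determinant expression. -/
def d3 (u v w : Fin 7 → ℝ) (a b c : Fin 7) : ℝ :=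
  u a * (v b * w c - v c * w b) - u b * (v a * w c - v c * w a) + u c * (v a * w b - v b * w a)

lemma dx3_apply (a b c : Fin 7) (u v w : Fin 7 → ℝ) :
    dx3 a b c ![u, v, w] = d3 u v w a b c := by
  have h : dx3 a b c ![u, v, w] = Matrix.det (Matrix.of fun i j => ![u, v, w] i (![a, b, c] j)) :=
    rfl
  rw [h, Matrix.det_fin_three]
  simp [d3, Matrix.of_apply]
  ring

lemma phi0_apply (u v w : Fin 7 → ℝ) : phi0 ![u, v, w] =
    d3 u v w 0 1 2 + d3 u v w 0 3 4 + d3 u v w 0 5 6 + d3 u v w 1 3 5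
      - d3 u v w 1 4 6 - d3 u v w 2 3 6 - d3 u v w 2 4 5 := by
  simp [phi0, dx3_apply]

/-- The `G₂` cross product of `u` and `v`, characterised by `⟨u × v, w⟩ = φ₀(u,v,w)`. -/
noncomputable def cross (u v : Fin 7 → ℝ) (k : Fin 7) : ℝ :=
  phi0 ![u, v, Pi.single k 1]

lemma dot_cross (u v w : Fin 7 → ℝ) :
    cross u v ⬝ᵥ w = phi0 ![u, v, w] := by
  simp [cross, phi0_apply, d3, dotProduct, Fin.sum_univ_seven, Pi.single_apply]
  ring

lemma norm_cross (u v : Fin 7 → ℝ) :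
    cross u v ⬝ᵥ cross u v = (u ⬝ᵥ u) * (v ⬝ᵥ v) - (u ⬝ᵥ v) ^ 2 := by
  simp [cross, phi0_apply, d3, dotProduct, Fin.sum_univ_seven, Pi.single_apply]
  ring

lemma cross_add_right (u v w : Fin 7 → ℝ) :
    cross u (v + w) = cross u v + cross u w := by
  funext k
  simp only [cross, phi0_apply, d3, Pi.add_apply]
  ring

lemma cross_smul_right (u : Fin 7 → ℝ) (c : ℝ) (v : Fin 7 → ℝ) :
    cross u (c • v) = c • cross u v := by
  funext k
  simp only [cross, phi0_apply, d3, Pi.smul_apply, smul_eq_mul]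
  ring

/-- The identity linear equivalence between `ℝ⁷` and `EuclideanSpace ℝ (Fin 7)`. -/
noncomputable def eL : (Fin 7 → ℝ) ≃ₗ[ℝ] EuclideanSpace ℝ (Fin 7) :=
  (WithLp.linearEquiv 2 ℝ (Fin 7 → ℝ)).symm

lemma inner_eL (u v : Fin 7 → ℝ) : (inner ℝ (eL u) (eL v) : ℝ) = u ⬝ᵥ v := by
  simp [eL, PiLp.inner_apply, RCLike.inner_apply, dotProduct, mul_comm]

/-- a 4-dimensional subspace `W` of `ℝ⁷` is coassociative (`φ₀` restricts to
zero on `W`) if and only if `W = W_I^{⊥,2}` (i.e. `W` is Type-I 2-Lagrangian w.r.t. `φ₀`). -/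
theorem g2_coassociative_iff_lagrangian (W : Submodule ℝ (Fin 7 → ℝ))
    (hW : Module.finrank ℝ W = 4) :
    (∀ w₁ ∈ W, ∀ w₂ ∈ W, ∀ w₃ ∈ W, phi0 ![w₁, w₂, w₃] = 0) ↔
      (W : Set (Fin 7 → ℝ)) = WIperp2 W := by
  constructor
  · intro hco
    apply Set.Subset.antisymm
    · intro v hv w₁ hw₁ w₂ hw₂
      exact hco v hv w₁ hw₁ w₂ hw₂
    · intro v hv
      set W' : Submodule ℝ (EuclideanSpace ℝ (Fin 7)) := W.map eL.toLinearMap with hW'def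
      have hW' : finrank ℝ W' = 4 := by
        rw [hW'def, LinearEquiv.finrank_map_eq]; exact hW
      obtain ⟨p, hp, q, hq, hpq⟩ := W'.exists_add_mem_mem_orthogonal (eL v)
      obtain ⟨p₀, hp₀, rfl⟩ := hp
      set q₀ := eL.symm q with hq₀def
      have heq : eL q₀ = q := by simp [hq₀def]
      have hv_eq : v = p₀ + q₀ := by
        apply eL.injective
        rw [map_add, heq, hpq]
        rfl
      have hq2 : ∀ w₁ ∈ W, ∀ w₂ ∈ W, phi0 ![q₀, w₁, w₂] = 0 := by
        intro w₁ h1 w₂ h2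
        have h3 := hv w₁ h1 w₂ h2
        have h4 := hco p₀ hp₀ w₁ h1 w₂ h2
        have hsub : q₀ = v - p₀ := by rw [hv_eq]; abel
        rw [hsub]
        simp only [phi0_apply, d3, Pi.sub_apply] at h3 h4 ⊢
        linear_combination h3 - h4
      by_cases hq0 : q₀ = 0
      · rw [hv_eq, hq0, add_zero]
        exact hp₀
      · exfalso
        have hqq : q₀ ⬝ᵥ q₀ ≠ 0 := fun h => hq0 (dotProduct_self_eq_zero.mp h)
        let L : (Fin 7 → ℝ) →ₗ[ℝ] (Fin 7 → ℝ) :=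
          { toFun := cross q₀
            map_add' := cross_add_right q₀
            map_smul' := cross_smul_right q₀ }
        let L' : EuclideanSpace ℝ (Fin 7) →ₗ[ℝ] EuclideanSpace ℝ (Fin 7) :=
          (eL.toLinearMap ∘ₗ L) ∘ₗ eL.symm.toLinearMap
        have hL' : ∀ z : Fin 7 → ℝ, L' (eL z) = eL (cross q₀ z) := by
          intro z; simp [L', L]
        let L'' := L'.domRestrict W'
        have hrange : LinearMap.range L'' ≤ W'ᗮ := by
          rintro x ⟨⟨z, hz⟩, rfl⟩
          rw [Submodule.mem_orthogonal]
          intro u hu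
          obtain ⟨u₀, hu₀, rfl⟩ := hu
          obtain ⟨z₀, hz₀, rfl⟩ := hz
          show (inner ℝ (eL u₀) (L' (eL z₀)) : ℝ) = 0
          rw [hL', inner_eL, dotProduct_comm, dot_cross]
          exact hq2 z₀ hz₀ u₀ hu₀
        have hinj : Function.Injective L'' := by
          rw [← LinearMap.ker_eq_bot, Submodule.eq_bot_iff]
          rintro ⟨z, hz⟩ hker
          obtain ⟨z₀, hz₀, rfl⟩ := hz
          have hcz : cross q₀ z₀ = 0 := by
            have : L' (eL z₀) = 0 := hker
            rw [hL'] at this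
            exact eL.injective (by simpa using this)
          have hdot : q₀ ⬝ᵥ z₀ = 0 := by
            have := (Submodule.mem_orthogonal W' q).mp hq (eL z₀) ⟨z₀, hz₀, rfl⟩
            rw [← heq] at this
            rw [dotProduct_comm, ← inner_eL, this]
          have hnc := norm_cross q₀ z₀
          rw [hcz, hdot] at hnc
          simp only [zero_dotProduct] at hnc
          have hz0 : z₀ ⬝ᵥ z₀ = 0 := by
            rcases mul_eq_zero.mp (by linarith [hnc] : (q₀ ⬝ᵥ q₀) * (z₀ ⬝ᵥ z₀) = 0) with h | h
            · exact absurd h hqq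
            · exact h
          have : z₀ = 0 := dotProduct_self_eq_zero.mp hz0
          simp [this]
        have h1 : finrank ℝ (LinearMap.range L'') = 4 := by
          rw [LinearMap.finrank_range_of_inj hinj, hW']
        have h2 : finrank ℝ (LinearMap.range L'') ≤ finrank ℝ W'ᗮ :=
          Submodule.finrank_mono hrange
        have h3 : finrank ℝ W' + finrank ℝ W'ᗮ = 7 := by
          rw [W'.finrank_add_finrank_orthogonal, finrank_euclideanSpace_fin]
        omega
  · intro h w₁ h1 w₂ h2 w₃ h3
    have : w₁ ∈ WIperp2 W := h ▸ h1
    exact this w₂ h2 w₃ h3
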